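/- Every quadrangular dissection of a convex 2n-gon with n >= 2 has at least one cell whose boundary contains three consecutive edges of the polygon. -/

import Mathlib

/-- Arc length from `a` to `b` going counterclockwise around `Fin m`. -/
def arcd (m : ℕ) (a b : Fin m) : ℕ := (b.val + m - a.val) % m

/-- `x` lies strictly between `a` and `b` going counterclockwise. -/
def btwn (m : ℕ) (a x b : Fin m) : Prop := 0 < arcd m a x ∧ arcd m a x < arcd m a b

/-- Two chords of the convex `m`-gon cross in their interiors. -/
def Crosses (m : ℕ) (d e : Fin m × Fin m) : Prop :=
  (btwn m d.1 e.1 d.2 ∧ btwn m d.2 e.2 d.1) ∨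
  (btwn m d.1 e.2 d.2 ∧ btwn m d.2 e.1 d.1)

/-- `d` is a diagonal of the convex `m`-gon: its endpoints are distinct and non-adjacent. -/
def IsPolyDiagonal (m : ℕ) (d : Fin m × Fin m) : Prop :=
  arcd m d.1 d.2 ≠ 0 ∧ arcd m d.1 d.2 ≠ 1 ∧ arcd m d.2 d.1 ≠ 1

/-- `y` is the cyclic successor of `x` within the vertex set `C`. -/
def SuccIn (m : ℕ) (C : Finset (Fin m)) (x y : Fin m) : Prop :=
  x ∈ C ∧ y ∈ C ∧ y ≠ x ∧ ∀ z ∈ C, z ≠ x → arcd m x y ≤ arcd m x z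

/-- `C` is (the vertex set of) a cell of the dissection of the convex `m`-gon by
the diagonals `D`: consecutive vertices of `C` are joined by polygon edges or
diagonals of `D`, and no diagonal of `D` subdivides `C`. -/
def IsCell (m : ℕ) (D : Finset (Fin m × Fin m)) (C : Finset (Fin m)) : Prop :=
  3 ≤ C.card ∧
  (∀ x y : Fin m, SuccIn m C x y → arcd m x y = 1 ∨ (x, y) ∈ D ∨ (y, x) ∈ D) ∧
  ∀ d ∈ D, d.1 ∈ C → d.2 ∈ C → SuccIn m C d.1 d.2 ∨ SuccIn m C d.2 d.1

/-- A quadrangular dissection of a convex `2n`-gon: `n - 2` pairwise non-crossing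
diagonals, all of whose cells are quadrilaterals. -/
structure QDiss (n : ℕ) where
  diags : Finset (Fin (2*n) × Fin (2*n))
  ord : ∀ d ∈ diags, d.1 < d.2
  isDiag : ∀ d ∈ diags, IsPolyDiagonal (2*n) d
  noncross : ∀ d ∈ diags, ∀ e ∈ diags, ¬ Crosses (2*n) d e
  card_eq : diags.card = n - 2
  quad : ∀ C : Finset (Fin (2*n)), IsCell (2*n) diags C → C.card = 4

/- ### Auxiliary lemmas about `arcd` -/

lemma mod2 (t m : ℕ) (h : t < 2*m) : t % m = if t < m then t else t - m := by
  split_ifs with ht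
  · exact Nat.mod_eq_of_lt ht
  · rw [Nat.mod_eq_sub_mod (by omega), Nat.mod_eq_of_lt (by omega)]

lemma arcd_val (m : ℕ) (a b : Fin m) :
    arcd m a b = if a.val ≤ b.val then b.val - a.val else b.val + m - a.val := by
  have ha := a.isLt; have hb := b.isLt
  unfold arcd
  rw [mod2 _ _ (by omega)]
  split_ifs <;> omega

lemma arcd_lt {m : ℕ} (a b : Fin m) : arcd m a b < m :=
  Nat.mod_lt _ (Nat.pos_of_lt_add_right (Nat.lt_add_left _ a.isLt))

lemma arcd_eq_zero_iff {m : ℕ} {a b : Fin m} : arcd m a b = 0 ↔ a = b := by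
  have ha := a.isLt; have hb := b.isLt
  rw [arcd_val, Fin.ext_iff]
  split_ifs <;> omega

lemma arcd_self {m : ℕ} (a : Fin m) : arcd m a a = 0 := arcd_eq_zero_iff.mpr rfl

lemma arcd_left_inj {m : ℕ} {x y y' : Fin m} (h : arcd m x y = arcd m x y') : y = y' := by
  have := x.isLt; have := y.isLt; have := y'.isLt
  rw [arcd_val, arcd_val] at h
  apply Fin.ext
  split_ifs at h <;> omega

lemma arcd_sum {m : ℕ} {a b : Fin m} (h : a ≠ b) : arcd m a b + arcd m b a = m := by
  have ha := a.isLt; have hb := b.isLt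
  have hne : a.val ≠ b.val := fun hh => h (Fin.ext hh)
  rw [arcd_val, arcd_val]
  split_ifs <;> omega

lemma arcd_exists {m : ℕ} (a : Fin m) (j : ℕ) (hj : j < m) : ∃ x : Fin m, arcd m a x = j := by
  have ha := a.isLt
  refine ⟨⟨(a.val + j) % m, Nat.mod_lt _ (by omega)⟩, ?_⟩
  rw [arcd_val]
  simp only
  rw [mod2 _ _ (by omega)]
  split_ifs <;> omega

lemma arcd_trans (m : ℕ) (a x z : Fin m) :
    (arcd m a x + arcd m x z) % m = arcd m a z := by
  have ha := a.isLt; have hx := x.isLt; have hz := z.isLt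
  have h1 := arcd_val m a x; have h2 := arcd_val m x z; have h3 := arcd_val m a z
  rw [mod2 _ _ (by have := arcd_lt a x; have := arcd_lt x z; omega)]
  split_ifs at h1 h2 h3 ⊢ <;> omega

lemma arcd_mk {m : ℕ} (a : Fin m) (j : ℕ) (hj : j < m) (h : (a.val + j) % m < m) :
    arcd m a ⟨(a.val + j) % m, h⟩ = j := by
  have ha := a.isLt
  show ((a.val + j) % m + m - a.val) % m = j
  rw [mod2 (a.val + j) m (by omega)]
  split_ifs with h1
  · rw [mod2 _ m (by omega)]; split_ifs <;> omega
  · rw [mod2 _ m (by omega)]; split_ifs <;> omega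

lemma mk_arcd {m : ℕ} (a x : Fin m) (h : (a.val + arcd m a x) % m < m) :
    (⟨(a.val + arcd m a x) % m, h⟩ : Fin m) = x :=
  arcd_left_inj (arcd_mk a (arcd m a x) (arcd_lt a x) h)

lemma arcd_step {m : ℕ} {a x z : Fin m} (h : arcd m a x + 1 = arcd m a z) :
    arcd m x z = 1 := by
  have h4 := arcd_trans m a x z
  have h5 := arcd_lt x z
  have h6 := arcd_lt a z
  rw [← h, mod2 _ _ (by omega)] at h4
  split_ifs at h4 <;> omega

lemma succ_arcd_one {m : ℕ} {C : Finset (Fin m)} {x y : Fin m}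
    (hs : SuccIn m C x y) (x' : Fin m) (hx' : x' ∈ C) (h1 : arcd m x x' = 1) :
    arcd m x y = 1 := by
  obtain ⟨hx, hy, hyx, hmin⟩ := hs
  have hne : x' ≠ x := by
    intro h; subst h; rw [arcd_self] at h1; omega
  have hle := hmin x' hx' hne
  have h0 : arcd m x y ≠ 0 := fun h => hyx (arcd_left_inj (h.trans (arcd_self x).symm))
  omega

/-- Every quadrangular dissection of a convex `2n`-gon (`n ≥ 2`) has a cell whose
boundary contains three consecutive edges of the polygon. -/
theorem qdiss_exists_ear (n : ℕ) (hn : 2 ≤ n) (q : QDiss n) :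
    ∃ C : Finset (Fin (2*n)), IsCell (2*n) q.diags C ∧
      ∃ x y z w : Fin (2*n), x ∈ C ∧ y ∈ C ∧ z ∈ C ∧ w ∈ C ∧
        arcd (2*n) x y = 1 ∧ arcd (2*n) y z = 1 ∧ arcd (2*n) z w = 1 := by
  have hm : 4 ≤ 2*n := by omega
  by_cases hD : q.diags = ∅
  · -- no diagonals: whole polygon is one cell, and n = 2
    have hn2 : n = 2 := by
      have hc := q.card_eq
      rw [hD, Finset.card_empty] at hc
      omega
    subst hn2
    refine ⟨Finset.univ, ⟨?_, ?_, ?_⟩, ?_⟩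
    · simp
    · intro x y hs
      left
      obtain ⟨x', hx'⟩ := arcd_exists x 1 (by omega)
      exact succ_arcd_one hs x' (Finset.mem_univ _) hx'
    · intro d hd
      rw [hD] at hd
      exact absurd hd (Finset.notMem_empty d)
    · obtain ⟨y, hy⟩ := arcd_exists (0 : Fin (2*2)) 1 (by omega)
      obtain ⟨z, hz⟩ := arcd_exists (0 : Fin (2*2)) 2 (by omega)
      obtain ⟨w, hw⟩ := arcd_exists (0 : Fin (2*2)) 3 (by omega)
      exact ⟨0, y, z, w, Finset.mem_univ _, Finset.mem_univ _, Finset.mem_univ _,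
        Finset.mem_univ _, hy, arcd_step (a := 0) (by omega), arcd_step (a := 0) (by omega)⟩
  · -- there is a diagonal: take one of minimal arc length (in either orientation)
    obtain ⟨d0, hd0⟩ := Finset.nonempty_iff_ne_empty.mpr hD
    classical
    set S : Finset (Fin (2*n) × Fin (2*n)) := q.diags ∪ q.diags.image Prod.swap with hS
    obtain ⟨p, hpS, hpmin0⟩ := Finset.exists_min_image S (fun e => arcd (2*n) e.1 e.2)
      ⟨d0, Finset.mem_union_left _ hd0⟩
    obtain ⟨a, b⟩ := p
    have hpmin : ∀ e ∈ S, arcd (2*n) a b ≤ arcd (2*n) e.1 e.2 := fun e he => hpmin0 e he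
    have hDab : (a, b) ∈ q.diags ∨ (b, a) ∈ q.diags := by
      rcases Finset.mem_union.mp hpS with h | h
      · exact Or.inl h
      · obtain ⟨⟨e1, e2⟩, he, hswap⟩ := Finset.mem_image.mp h
        rw [Prod.swap_prod_mk, Prod.mk.injEq] at hswap
        obtain ⟨h1, h2⟩ := hswap
        subst h1; subst h2
        exact Or.inr he
    set k := arcd (2*n) a b with hk
    have hk0 : arcd (2*n) a b ≠ 0 ∧ arcd (2*n) a b ≠ 1 ∧ arcd (2*n) b a ≠ 1 := by
      rcases hDab with h | h
      · obtain ⟨h1, h2, h3⟩ := q.isDiag _ h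
        exact ⟨h1, h2, h3⟩
      · obtain ⟨h1, h2, h3⟩ := q.isDiag _ h
        refine ⟨fun hh => h1 ?_, h3, h2⟩
        rw [arcd_eq_zero_iff] at hh ⊢
        exact hh.symm
    have hab : a ≠ b := fun h => hk0.1 (arcd_eq_zero_iff.mpr h)
    have hsum : arcd (2*n) a b + arcd (2*n) b a = 2*n := arcd_sum hab
    have hk2 : 2 ≤ k := by
      have := hk0.1; have := hk0.2.1; omega
    have hkm : k ≤ 2*n - 2 := by
      have hba0 : arcd (2*n) b a ≠ 0 := fun h => hab (arcd_eq_zero_iff.mp h).symm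
      have := hk0.2.2; omega
    have hklt : k < 2*n := arcd_lt a b
    set C : Finset (Fin (2*n)) := Finset.univ.filter (fun x => arcd (2*n) a x ≤ k) with hCdef
    have mem_C : ∀ x : Fin (2*n), x ∈ C ↔ arcd (2*n) a x ≤ k := by
      intro x; simp [hCdef]
    -- cardinality of C
    have hcard : C.card = k + 1 := by
      have hmpos : 0 < 2*n := by omega
      have hbij := Finset.card_nbij' (s := C) (t := Finset.range (k+1))
        (i := fun x => arcd (2*n) a x)
        (j := fun j => ⟨(a.val + j) % (2*n), Nat.mod_lt _ hmpos⟩)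
        (fun x hx => Finset.mem_range.mpr (Nat.lt_succ_of_le ((mem_C x).mp hx)))
        (fun j hj => by
          simp only [Finset.mem_coe] at hj ⊢
          rw [mem_C, arcd_mk a j (by have := Finset.mem_range.mp hj; omega)]
          have := Finset.mem_range.mp hj
          omega)
        (fun x _ => mk_arcd a x _)
        (fun j hj => arcd_mk a j (by have := Finset.mem_range.mp hj; omega) _)
      rw [hbij, Finset.card_range]
    have haC : a ∈ C := (mem_C a).mpr (by rw [arcd_self]; omega)
    have hbC : b ∈ C := (mem_C b).mpr (by omega)
    -- b's cyclic successor in C is a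
    have hbmin : ∀ z ∈ C, z ≠ b → arcd (2*n) b a ≤ arcd (2*n) b z := by
      intro z hzC hzb
      have hj := (mem_C z).mp hzC
      have hjk : arcd (2*n) a z ≠ k := fun h =>
        hzb (arcd_left_inj (h.trans hk))
      have ht := arcd_trans (2*n) a b z
      have hlt := arcd_lt b z
      rw [mod2 _ _ (by omega)] at ht
      split_ifs at ht <;> omega
    have hSba : SuccIn (2*n) C b a := ⟨hbC, haC, hab, hbmin⟩
    have hcell : IsCell (2*n) q.diags C := by
      refine ⟨?_, ?_, ?_⟩
      · rw [hcard]; omega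
      · intro x y hs
        have hxC := hs.1
        have hi := (mem_C x).mp hxC
        by_cases hik : arcd (2*n) a x = k
        · -- x = b, y must be a
          have hxb : x = b := arcd_left_inj (hik.trans hk)
          subst hxb
          have h1 := hs.2.2.2 a haC hab
          have h2 := hbmin y hs.2.1 hs.2.2.1
          have hya : y = a := arcd_left_inj (le_antisymm h1 h2)
          subst hya
          rcases hDab with h | h
          · right; right; exact h
          · right; left; exact h
        · -- arcd a x < k: successor is the next vertex of the polygon
          left
          obtain ⟨x', hx'⟩ := arcd_exists a (arcd (2*n) a x + 1) (by omega)
          have hx'C : x' ∈ C := (mem_C x').mpr (by omega)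
          exact succ_arcd_one hs x' hx'C (arcd_step (a := a) (by omega))
      · intro e he h1 h2
        have hi := (mem_C e.1).mp h1
        have hj := (mem_C e.2).mp h2
        have he12 : e.1 ≠ e.2 := fun h => (q.isDiag e he).1 (arcd_eq_zero_iff.mpr h)
        have hij : arcd (2*n) a e.1 ≠ arcd (2*n) a e.2 := fun h => he12 (arcd_left_inj h)
        rcases Nat.lt_or_ge (arcd (2*n) a e.1) (arcd (2*n) a e.2) with hlt | hge
        · -- arcd e.1 e.2 = j - i, minimality forces e = (a,b)
          have ht := arcd_trans (2*n) a e.1 e.2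
          have hv := arcd_lt e.1 e.2
          rw [mod2 _ _ (by omega)] at ht
          have hveq : arcd (2*n) e.1 e.2 = arcd (2*n) a e.2 - arcd (2*n) a e.1 := by
            split_ifs at ht <;> omega
          have hmin := hpmin e (Finset.mem_union_left _ he)
          have hi0 : arcd (2*n) a e.1 = 0 := by omega
          have hjk : arcd (2*n) a e.2 = k := by omega
          have he1 : e.1 = a := (arcd_left_inj (hi0.trans (arcd_self a).symm))
          have he2 : e.2 = b := arcd_left_inj (hjk.trans hk)
          right
          rw [he1, he2]
          exact hSba
        · have hlt' : arcd (2*n) a e.2 < arcd (2*n) a e.1 := by omega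
          have ht := arcd_trans (2*n) a e.2 e.1
          have hv := arcd_lt e.2 e.1
          rw [mod2 _ _ (by omega)] at ht
          have hveq : arcd (2*n) e.2 e.1 = arcd (2*n) a e.1 - arcd (2*n) a e.2 := by
            split_ifs at ht <;> omega
          have hmem : (e.2, e.1) ∈ S := by
            apply Finset.mem_union_right
            exact Finset.mem_image.mpr ⟨e, he, rfl⟩
          have hmin : k ≤ arcd (2*n) e.2 e.1 := hpmin (e.2, e.1) hmem
          have hj0 : arcd (2*n) a e.2 = 0 := by omega
          have hik : arcd (2*n) a e.1 = k := by omega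
          have he2 : e.2 = a := (arcd_left_inj (hj0.trans (arcd_self a).symm))
          have he1 : e.1 = b := arcd_left_inj (hik.trans hk)
          left
          rw [he1, he2]
          exact hSba
    have hC4 := q.quad C hcell
    have hk3 : k = 3 := by rw [hcard] at hC4; omega
    obtain ⟨y, hy⟩ := arcd_exists a 1 (by omega)
    obtain ⟨z, hz⟩ := arcd_exists a 2 (by omega)
    obtain ⟨w, hw⟩ := arcd_exists a 3 (by omega)
    refine ⟨C, hcell, a, y, z, w, haC, ?_, ?_, ?_, ?_, ?_, ?_⟩
    · exact (mem_C y).mpr (by omega)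
    · exact (mem_C z).mpr (by omega)
    · exact (mem_C w).mpr (by omega)
    · exact hy
    · exact arcd_step (a := a) (by omega)
    · exact arcd_step (a := a) (by omega)
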